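/- Let d = 2 and assume φ'(1) > 0. Let q ∈ ℝ^m have positive integer entries, set n = q_1 + ⋯ + q_m, and given X = (x_1,…,x_m) ∈ ℝ^{2×m} with unit-norm columns, let X̃ ∈ ℝ^{2×n} be the matrix whose columns repeat x_i exactly q_i times, for i = 1,…,m. If X is critical for f_m(X) = (1/2)⟨qqᵀ, φ(XᵀX)⟩ and the Laplacian L(M) with m_ij = q_i q_j h(x_iᵀx_j) is positive semidefinite with kernel exactly span(1_m), then X̃ is critical for f_n(X̃) = (1/2)⟨1_n 1_nᵀ, φ(X̃ᵀX̃)⟩ and the Laplacian L(M̃) with m̃_kl = h(x̃_kᵀx̃_l) is positive semidefinite with kernel exactly span(1_n). Here h(t) = tφ'(t) − (1−t²)φ''(t). -/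

import Mathlib

open Matrix

noncomputable section

/-- Frobenius inner product `⟨A,B⟩ = ∑ᵢⱼ Aᵢⱼ Bᵢⱼ`. -/
def frob {ι κ : Type*} [Fintype ι] [Fintype κ] (A B : Matrix ι κ ℝ) : ℝ :=
  ∑ i, ∑ j, A i j * B i j

/-- `ddiag` zeroes out all off-diagonal entries of a square matrix. -/
def ddiag {ι : Type*} [Fintype ι] [DecidableEq ι] (M : Matrix ι ι ℝ) : Matrix ι ι ℝ :=
  Matrix.diagonal fun i => M i i

/-- Graph Laplacian `L(M) = diag(M 1) − M`. -/
def lap {ι : Type*} [Fintype ι] [DecidableEq ι] (M : Matrix ι ι ℝ) : Matrix ι ι ℝ :=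
  Matrix.diagonal (fun i => ∑ j, M i j) - M

/-- `X` has unit-norm columns. -/
def unitCols {d : ℕ} {ι : Type*} [Fintype ι] (X : Matrix (Fin d) ι ℝ) : Prop :=
  ∀ j, ∑ i, X i j ^ 2 = 1

/-- `A = W ⊙ φ'(XᵀX)` (`d1` playing the role of `φ'`). -/
def Amat {d : ℕ} {ι : Type*} [Fintype ι] (W : Matrix ι ι ℝ) (X : Matrix (Fin d) ι ℝ)
    (d1 : ℝ → ℝ) : Matrix ι ι ℝ :=
  Matrix.hadamard W ((Xᵀ * X).map d1)

/-- `S = ddiag(XᵀXA) − A`. -/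
def Smat {d : ℕ} {ι : Type*} [Fintype ι] [DecidableEq ι] (W : Matrix ι ι ℝ)
    (X : Matrix (Fin d) ι ℝ) (d1 : ℝ → ℝ) : Matrix ι ι ℝ :=
  ddiag ((Xᵀ * X) * Amat W X d1) - Amat W X d1

/-- First-order criticality: `X S = 0`, i.e. `X·ddiag(XᵀXA) = XA`
(vanishing Riemannian gradient on the product of spheres). -/
def IsCritical {d : ℕ} {ι : Type*} [Fintype ι] [DecidableEq ι] (W : Matrix ι ι ℝ)
    (X : Matrix (Fin d) ι ℝ) (d1 : ℝ → ℝ) : Prop :=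
  X * Smat W X d1 = 0

/-- The Riemannian Hessian quadratic form of `f` at `X` is negative semidefinite:
`−⟨ẊᵀẊ, S⟩ + (1/2)⟨(XᵀẊ + ẊᵀX)^{⊙2}, W ⊙ φ''(XᵀX)⟩ ≤ 0` for all tangent `Ẋ`. -/
def HessNegSemidef {d : ℕ} {ι : Type*} [Fintype ι] [DecidableEq ι] (W : Matrix ι ι ℝ)
    (X : Matrix (Fin d) ι ℝ) (d1 d2 : ℝ → ℝ) : Prop :=
  ∀ V : Matrix (Fin d) ι ℝ, (∀ j, (Xᵀ * V) j j = 0) →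
    -(frob (Vᵀ * V) (Smat W X d1))
      + (1 / 2) * frob ((Xᵀ * V + Vᵀ * X).map fun t => t ^ 2)
          (Matrix.hadamard W ((Xᵀ * X).map d2)) ≤ 0

/-- The graph with an edge `{i,j}` whenever `w_ij > 0` is connected. -/
def ConnectedW {ι : Type*} (W : Matrix ι ι ℝ) : Prop :=
  (SimpleGraph.fromRel fun i j => 0 < W i j).Connected

/-- `f(Y) = (1/2)⟨W, φ(YᵀY)⟩`. -/
def fval {d : ℕ} {ι : Type*} [Fintype ι] (W : Matrix ι ι ℝ) (φ : ℝ → ℝ)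
    (Y : Matrix (Fin d) ι ℝ) : ℝ :=
  (1 / 2) * frob W ((Yᵀ * Y).map φ)

/-- `h(t) = tφ'(t) − (1−t²)φ''(t)`. -/
def hfun (d1 d2 : ℝ → ℝ) (t : ℝ) : ℝ := t * d1 t - (1 - t ^ 2) * d2 t

/-- The matrix `M` with `m_ij = w_ij · h(x_iᵀx_j)`. -/
def Mmat {d : ℕ} {ι : Type*} [Fintype ι] (W : Matrix ι ι ℝ) (X : Matrix (Fin d) ι ℝ)
    (d1 d2 : ℝ → ℝ) : Matrix ι ι ℝ :=
  Matrix.of fun i j => W i j * hfun d1 d2 ((Xᵀ * X) i j)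

/-- The kernel of `L` is exactly `span(1)`. -/
def KernelIsConst {ι : Type*} [Fintype ι] [DecidableEq ι] (L : Matrix ι ι ℝ) : Prop :=
  ∀ α : ι → ℝ, L.mulVec α = 0 ↔ ∃ c : ℝ, ∀ k, α k = c

/-- The regular `n`-gon configuration on the unit circle. -/
def ngon (n : ℕ) : Matrix (Fin 2) (Fin n) ℝ :=
  Matrix.of fun a j =>
    if a = 0 then Real.cos (2 * Real.pi * (j : ℝ) / (n : ℝ))
    else Real.sin (2 * Real.pi * (j : ℝ) / (n : ℝ))

/-- The log-sum-exp smoothing `φ_{ε,τ}(t) = ε·log(1 + e^{(t−τ)/ε})` of the ReLU. -/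
def philse (ε τ : ℝ) : ℝ → ℝ := fun t => ε * Real.log (1 + Real.exp ((t - τ) / ε))

section AuxRepeating

lemma XS_apply' {d : ℕ} {ι : Type*} [Fintype ι] [DecidableEq ι] (W : Matrix ι ι ℝ)
    (X : Matrix (Fin d) ι ℝ) (d1 : ℝ → ℝ) (a : Fin d) (l : ι) :
    (X * Smat W X d1) a l
      = X a l * (∑ k, (∑ b, X b l * X b k) * (W k l * d1 (∑ b, X b k * X b l)))
        - ∑ k, X a k * (W k l * d1 (∑ b, X b k * X b l)) := by
  simp only [Smat, ddiag, Amat, Matrix.sub_apply, Matrix.mul_apply, Matrix.hadamard,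
    Matrix.map_apply, Matrix.transpose_apply, Matrix.diagonal_apply, mul_sub,
    Finset.sum_sub_distrib, mul_ite, mul_zero, Finset.sum_ite_eq', Finset.mem_univ, if_true,
    Matrix.of_apply]

lemma quad_lap' {ι : Type*} [Fintype ι] [DecidableEq ι] (M : Matrix ι ι ℝ) (v : ι → ℝ) :
    v ⬝ᵥ (lap M).mulVec v = ∑ i, ∑ j, M i j * (v i * v i - v i * v j) := by
  simp only [lap, dotProduct, Matrix.mulVec, Matrix.sub_apply, Matrix.diagonal_apply,
    sub_mul, ite_mul, zero_mul, Finset.sum_sub_distrib, Finset.sum_ite_eq, Finset.mem_univ,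
    if_true, mul_sub, Finset.mul_sum, Finset.sum_mul]
  congr 1
  · exact Finset.sum_congr rfl fun i _ => Finset.sum_congr rfl fun j _ => by ring
  · exact Finset.sum_congr rfl fun i _ => Finset.sum_congr rfl fun j _ => by ring

lemma lap_diag' {ι : Type*} [Fintype ι] [DecidableEq ι] (M : Matrix ι ι ℝ)
    (h : (lap M).PosSemidef) (i : ι) : M i i ≤ ∑ j, M i j := by
  have h2 := h.dotProduct_mulVec_nonneg (Pi.single i 1)
  simp only [dotProduct, Matrix.mulVec, star_trivial, Pi.single_apply, ite_mul, one_mul,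
    zero_mul, mul_ite, mul_one, mul_zero, Finset.sum_ite_eq, Finset.sum_ite_eq',
    Finset.mem_univ, if_true, lap, Matrix.sub_apply, Matrix.diagonal_apply_eq] at h2
  linarith

lemma lap_const' {ι : Type*} [Fintype ι] [DecidableEq ι] (M : Matrix ι ι ℝ) (c : ℝ) :
    (lap M).mulVec (fun _ => c) = 0 := by
  funext k
  simp only [Matrix.mulVec, dotProduct, lap, Matrix.sub_apply, Matrix.diagonal_apply,
    sub_mul, ite_mul, zero_mul, Finset.sum_sub_distrib, Finset.sum_ite_eq, Finset.mem_univ,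
    if_true, Pi.zero_apply, Finset.sum_mul]
  ring

lemma lap_herm' {ι : Type*} [Fintype ι] [DecidableEq ι] (M : Matrix ι ι ℝ)
    (hs : ∀ i j, M i j = M j i) : (lap M).IsHermitian := by
  show (lap M)ᴴ = lap M
  ext i j
  simp only [Matrix.conjTranspose_apply, lap, Matrix.sub_apply, Matrix.diagonal_apply,
    star_trivial, star_sub]
  by_cases hij : i = j
  · subst hij; simp
  · simp [hij, Ne.symm hij, hs j i]

lemma expand_sigma' {m : ℕ} {q : Fin m → ℕ} (f : ((i : Fin m) × Fin (q i)) → ℝ) :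
    ∑ k : (i : Fin m) × Fin (q i), f k = ∑ i, ∑ t, f ⟨i, t⟩ := by
  rw [← Finset.univ_sigma_univ, Finset.sum_sigma]

lemma inner_quad' {m : ℕ} (q : Fin m → ℕ) (c a : ℝ) {j : Fin m} (w : Fin (q j) → ℝ) :
    ∑ u, c * (a * a - a * w u) = c * ((q j : ℝ) * (a * a) - a * ∑ u, w u) := by
  simp only [mul_sub, Finset.sum_sub_distrib, Finset.sum_const, Finset.card_univ,
    Fintype.card_fin, nsmul_eq_mul, ← Finset.mul_sum]
  ring

lemma scalar_id' (qi qj c Q s sj : ℝ) (hqi : qi ≠ 0) (hqj : qj ≠ 0) :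
    c * (qj * Q - s * sj) = (qi * qj * c) * (s / qi * (s / qi) - s / qi * (sj / qj))
      + (qj * c) * (Q - s * s / qi) := by
  field_simp
  ring

lemma main_id' {m : ℕ} (q : Fin m → ℕ) (hq : ∀ i, 1 ≤ q i) (c : Fin m → Fin m → ℝ)
    (v : (i : Fin m) × Fin (q i) → ℝ) :
    ∑ k : (i : Fin m) × Fin (q i), ∑ l : (i : Fin m) × Fin (q i),
        c k.1 l.1 * (v k * v k - v k * v l)
      = (∑ i, ∑ j, ((q i : ℝ) * (q j : ℝ) * c i j) *
            ((∑ t, v ⟨i, t⟩) / (q i : ℝ) * ((∑ t, v ⟨i, t⟩) / (q i : ℝ))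
              - (∑ t, v ⟨i, t⟩) / (q i : ℝ) * ((∑ t, v ⟨j, t⟩) / (q j : ℝ))))
        + ∑ i, (∑ j, (q j : ℝ) * c i j) *
            ((∑ t, v ⟨i, t⟩ * v ⟨i, t⟩) - (∑ t, v ⟨i, t⟩) * (∑ t, v ⟨i, t⟩) / (q i : ℝ)) := by
  have hq0 : ∀ i, ((q i : ℝ)) ≠ 0 := fun i =>
    Nat.cast_ne_zero.mpr (Nat.one_le_iff_ne_zero.mp (hq i))
  rw [expand_sigma', ← Finset.sum_add_distrib]
  refine Finset.sum_congr rfl fun i _ => ?_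
  calc ∑ t, ∑ l : (i : Fin m) × Fin (q i), c i l.1 * (v ⟨i,t⟩ * v ⟨i,t⟩ - v ⟨i,t⟩ * v l)
      = ∑ t, ∑ j, ∑ u, c i j * (v ⟨i,t⟩ * v ⟨i,t⟩ - v ⟨i,t⟩ * v ⟨j,u⟩) := by
        exact Finset.sum_congr rfl fun t _ => expand_sigma' _
    _ = ∑ j, ∑ t, ∑ u, c i j * (v ⟨i,t⟩ * v ⟨i,t⟩ - v ⟨i,t⟩ * v ⟨j,u⟩) := Finset.sum_comm
    _ = ∑ j, (c i j * ((q j : ℝ) * (∑ t, v ⟨i,t⟩ * v ⟨i,t⟩) - (∑ t, v ⟨i,t⟩) * (∑ u, v ⟨j,u⟩))) := by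
        refine Finset.sum_congr rfl fun j _ => ?_
        rw [Finset.sum_congr rfl fun t _ => inner_quad' q (c i j) (v ⟨i,t⟩) (fun u => v ⟨j,u⟩)]
        simp only [mul_sub, Finset.sum_sub_distrib, ← Finset.mul_sum, ← Finset.sum_mul]
    _ = (∑ j, ((q i : ℝ) * (q j : ℝ) * c i j) *
            ((∑ t, v ⟨i, t⟩) / (q i : ℝ) * ((∑ t, v ⟨i, t⟩) / (q i : ℝ))
              - (∑ t, v ⟨i, t⟩) / (q i : ℝ) * ((∑ t, v ⟨j, t⟩) / (q j : ℝ))))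
        + (∑ j, (q j : ℝ) * c i j) *
            ((∑ t, v ⟨i, t⟩ * v ⟨i, t⟩) - (∑ t, v ⟨i, t⟩) * (∑ t, v ⟨i, t⟩) / (q i : ℝ)) := by
        rw [Finset.sum_mul, ← Finset.sum_add_distrib]
        exact Finset.sum_congr rfl fun j _ =>
          scalar_id' (q i) (q j) (c i j) _ _ _ (hq0 i) (hq0 j)

end AuxRepeating

lemma var_id' {n : ℕ} (hn : ((n : ℝ)) ≠ 0) (w : Fin n → ℝ) :
    ∑ u, (w u - (∑ u, w u) / (n : ℝ)) ^ 2
      = (∑ u, w u * w u) - (∑ u, w u) * (∑ u, w u) / (n : ℝ) := by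
  have e : ∀ u, (w u - (∑ u, w u) / (n : ℝ)) ^ 2
      = w u * w u - (2 * ((∑ u, w u) / (n : ℝ))) * w u + ((∑ u, w u) / (n : ℝ)) ^ 2 :=
    fun u => by ring
  rw [Finset.sum_congr rfl fun u _ => e u, Finset.sum_add_distrib, Finset.sum_sub_distrib,
    ← Finset.mul_sum, Finset.sum_const, Finset.card_univ, Fintype.card_fin, nsmul_eq_mul]
  field_simp
  ring


/-- Lemma 5, trading weights for repetitions: if `X` is a strict spurious
critical point of `f_m` with weights `qqᵀ`, then repeating each `x_i` exactly `q_i` times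
gives a strict spurious critical point of `f_n` with unit weights. -/
theorem repeating_points
    {m : ℕ} (hm : 1 ≤ m)
    (φ d1 d2 : ℝ → ℝ)
    (hder1 : ∀ t ∈ Set.Icc (-1 : ℝ) 1, HasDerivAt φ (d1 t) t)
    (hder2 : ∀ t ∈ Set.Icc (-1 : ℝ) 1, HasDerivAt d1 (d2 t) t)
    (hphi1 : 0 < d1 1)
    (q : Fin m → ℕ) (hq : ∀ i, 1 ≤ q i)
    (X : Matrix (Fin 2) (Fin m) ℝ) (hX : unitCols X)
    (hcrit : IsCritical (Matrix.of fun i j => (q i : ℝ) * (q j : ℝ)) X d1)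
    (hpsd : (lap (Mmat (Matrix.of fun i j => (q i : ℝ) * (q j : ℝ)) X d1 d2)).PosSemidef)
    (hker : KernelIsConst
      (lap (Mmat (Matrix.of fun i j => (q i : ℝ) * (q j : ℝ)) X d1 d2))) :
    IsCritical (Matrix.of fun _ _ => (1 : ℝ))
      (Matrix.of fun a (k : (i : Fin m) × Fin (q i)) => X a k.1) d1 ∧
    (lap (Mmat (Matrix.of fun _ _ => (1 : ℝ))
      (Matrix.of fun a (k : (i : Fin m) × Fin (q i)) => X a k.1) d1 d2)).PosSemidef ∧
    KernelIsConst (lap (Mmat (Matrix.of fun _ _ => (1 : ℝ))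
      (Matrix.of fun a (k : (i : Fin m) × Fin (q i)) => X a k.1) d1 d2)) := by
  classical
  have hq0 : ∀ i, ((q i : ℝ)) ≠ 0 := fun i =>
    Nat.cast_ne_zero.mpr (Nat.one_le_iff_ne_zero.mp (hq i))
  have hqpos : ∀ i, (0 : ℝ) < (q i : ℝ) := fun i => by
    exact_mod_cast Nat.lt_of_lt_of_le Nat.zero_lt_one (hq i)
  have hG1 : ∀ i, (Xᵀ * X) i i = 1 := fun i => by
    simpa [Matrix.mul_apply, Matrix.transpose_apply, pow_two] using hX i
  have hGsymm : ∀ i j, (Xᵀ * X) i j = (Xᵀ * X) j i := fun i j => by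
    simp only [Matrix.mul_apply, Matrix.transpose_apply]
    exact Finset.sum_congr rfl fun a _ => mul_comm _ _
  have hh1 : hfun d1 d2 1 = d1 1 := by simp [hfun]
  have hMt : Mmat (Matrix.of fun _ _ => (1 : ℝ))
        (Matrix.of fun a (k : (i : Fin m) × Fin (q i)) => X a k.1) d1 d2
      = Matrix.of (fun k l : (i : Fin m) × Fin (q i) =>
          hfun d1 d2 ((Xᵀ * X) k.1 l.1)) := by
    ext k l
    simp [Mmat, Matrix.mul_apply, Matrix.transpose_apply, Matrix.of_apply]
  have hMs : Mmat (Matrix.of fun i j => (q i : ℝ) * (q j : ℝ)) X d1 d2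
      = Matrix.of (fun i j => (q i : ℝ) * (q j : ℝ) * hfun d1 d2 ((Xᵀ * X) i j)) := rfl
  -- positivity of the row sums c i
  have hc : ∀ i, 0 < ∑ j, (q j : ℝ) * hfun d1 d2 ((Xᵀ * X) i j) := by
    intro i
    have hd := lap_diag' _ hpsd i
    rw [hMs] at hd
    simp only [Matrix.of_apply] at hd
    rw [hG1 i, hh1] at hd
    have e : (∑ j, (q i : ℝ) * (q j : ℝ) * hfun d1 d2 ((Xᵀ * X) i j))
        = (q i : ℝ) * ∑ j, (q j : ℝ) * hfun d1 d2 ((Xᵀ * X) i j) := by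
      rw [Finset.mul_sum]; exact Finset.sum_congr rfl fun j _ => by ring
    rw [e] at hd
    have hd' : (q i : ℝ) * ((q i : ℝ) * d1 1)
        ≤ (q i : ℝ) * ∑ j, (q j : ℝ) * hfun d1 d2 ((Xᵀ * X) i j) := by
      rw [← mul_assoc]; exact hd
    exact lt_of_lt_of_le (mul_pos (hqpos i) hphi1)
      (le_of_mul_le_mul_left hd' (hqpos i))
  -- criticality of X, scalar form
  have key : ∀ (a : Fin 2) (j : Fin m),
      X a j * (∑ i, (q i : ℝ) * ((∑ b, X b j * X b i) * d1 (∑ b, X b i * X b j)))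
        - ∑ i, (q i : ℝ) * (X a i * d1 (∑ b, X b i * X b j)) = 0 := by
    intro a j
    have h0 : (X * Smat (Matrix.of fun i j => (q i : ℝ) * (q j : ℝ)) X d1) a j = 0 := by
      rw [hcrit]; rfl
    rw [XS_apply'] at h0
    simp only [Matrix.of_apply] at h0
    have e1 : (∑ k, (∑ b, X b j * X b k) * ((q k : ℝ) * (q j : ℝ) * d1 (∑ b, X b k * X b j)))
        = (q j : ℝ) * ∑ i, (q i : ℝ) * ((∑ b, X b j * X b i) * d1 (∑ b, X b i * X b j)) := by
      rw [Finset.mul_sum]; exact Finset.sum_congr rfl fun k _ => by ring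
    have e2 : (∑ k, X a k * ((q k : ℝ) * (q j : ℝ) * d1 (∑ b, X b k * X b j)))
        = (q j : ℝ) * ∑ i, (q i : ℝ) * (X a i * d1 (∑ b, X b i * X b j)) := by
      rw [Finset.mul_sum]; exact Finset.sum_congr rfl fun k _ => by ring
    rw [e1, e2] at h0
    have h1 : (q j : ℝ) *
        (X a j * (∑ i, (q i : ℝ) * ((∑ b, X b j * X b i) * d1 (∑ b, X b i * X b j)))
          - ∑ i, (q i : ℝ) * (X a i * d1 (∑ b, X b i * X b j))) = 0 := by
      linear_combination h0
    rcases mul_eq_zero.mp h1 with h | h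
    · exact absurd h (hq0 j)
    · exact h
  -- criticality of the repeated configuration
  have critY : IsCritical (Matrix.of fun _ _ => (1 : ℝ))
      (Matrix.of fun a (k : (i : Fin m) × Fin (q i)) => X a k.1) d1 := by
    unfold IsCritical
    ext a l
    rw [XS_apply']
    simp only [Matrix.of_apply, one_mul, Matrix.zero_apply]
    have E1 := expand_sigma' (q := q) (fun k : (i : Fin m) × Fin (q i) =>
      (∑ b, X b l.1 * X b k.1) * d1 (∑ b, X b k.1 * X b l.1))
    simp only [Finset.sum_const, Finset.card_univ, Fintype.card_fin, nsmul_eq_mul] at E1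
    have E2 := expand_sigma' (q := q) (fun k : (i : Fin m) × Fin (q i) =>
      X a k.1 * d1 (∑ b, X b k.1 * X b l.1))
    simp only [Finset.sum_const, Finset.card_univ, Fintype.card_fin, nsmul_eq_mul] at E2
    rw [E1, E2]
    exact key a l.1
  -- the quadratic-form identity
  have quadid : ∀ v : ((i : Fin m) × Fin (q i)) → ℝ,
      v ⬝ᵥ (lap (Mmat (Matrix.of fun _ _ => (1 : ℝ))
          (Matrix.of fun a (k : (i : Fin m) × Fin (q i)) => X a k.1) d1 d2)).mulVec v
        = (fun i => (∑ t, v ⟨i, t⟩) / (q i : ℝ)) ⬝ᵥ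
            (lap (Mmat (Matrix.of fun i j => (q i : ℝ) * (q j : ℝ)) X d1 d2)).mulVec
              (fun i => (∑ t, v ⟨i, t⟩) / (q i : ℝ))
          + ∑ i, (∑ j, (q j : ℝ) * hfun d1 d2 ((Xᵀ * X) i j)) *
              ((∑ t, v ⟨i, t⟩ * v ⟨i, t⟩)
                - (∑ t, v ⟨i, t⟩) * (∑ t, v ⟨i, t⟩) / (q i : ℝ)) := by
    intro v
    rw [hMt, hMs, quad_lap', quad_lap']
    simp only [Matrix.of_apply]
    exact main_id' q hq (fun i j => hfun d1 d2 ((Xᵀ * X) i j)) v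
  -- nonnegativity of the deficiency terms
  have hD : ∀ (v : ((i : Fin m) × Fin (q i)) → ℝ) (i : Fin m),
      0 ≤ (∑ t, v ⟨i, t⟩ * v ⟨i, t⟩) - (∑ t, v ⟨i, t⟩) * (∑ t, v ⟨i, t⟩) / (q i : ℝ) := by
    intro v i
    have cs := Finset.sum_mul_sq_le_sq_mul_sq Finset.univ (fun _ => (1 : ℝ))
      (fun t => v ⟨i, t⟩)
    simp only [one_mul, one_pow, Finset.sum_const, Finset.card_univ, Fintype.card_fin,
      nsmul_eq_mul, mul_one] at cs
    rw [sub_nonneg, div_le_iff₀ (hqpos i)]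
    have eQ : (∑ t, v ⟨i, t⟩ * v ⟨i, t⟩) = ∑ t, v ⟨i, t⟩ ^ 2 :=
      Finset.sum_congr rfl fun t _ => (pow_two _).symm
    rw [eQ]
    nlinarith [cs]
  have hstar : ∀ {κ : Type} [Fintype κ] (x : κ → ℝ), star x = x := fun x => by
    funext k; simp
  have hsymmM : ∀ k l : (i : Fin m) × Fin (q i),
      Mmat (Matrix.of fun _ _ => (1 : ℝ))
          (Matrix.of fun a (k : (i : Fin m) × Fin (q i)) => X a k.1) d1 d2 k l
        = Mmat (Matrix.of fun _ _ => (1 : ℝ))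
          (Matrix.of fun a (k : (i : Fin m) × Fin (q i)) => X a k.1) d1 d2 l k := by
    intro k l
    rw [hMt]
    simp only [Matrix.of_apply]
    rw [hGsymm k.1 l.1]
  refine ⟨critY, Matrix.PosSemidef.of_dotProduct_mulVec_nonneg (lap_herm' _ hsymmM) ?_, ?_⟩
  · -- PSD
    intro x
    rw [hstar x, quadid x]
    have t1 := hpsd.dotProduct_mulVec_nonneg (fun i => (∑ t, x ⟨i, t⟩) / (q i : ℝ))
    rw [hstar _] at t1
    have t2 : 0 ≤ ∑ i, (∑ j, (q j : ℝ) * hfun d1 d2 ((Xᵀ * X) i j)) *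
        ((∑ t, x ⟨i, t⟩ * x ⟨i, t⟩) - (∑ t, x ⟨i, t⟩) * (∑ t, x ⟨i, t⟩) / (q i : ℝ)) :=
      Finset.sum_nonneg fun i _ => mul_nonneg (le_of_lt (hc i)) (hD x i)
    linarith
  · -- kernel
    intro v
    constructor
    · intro hv
      have h0 : v ⬝ᵥ (lap (Mmat (Matrix.of fun _ _ => (1 : ℝ))
          (Matrix.of fun a (k : (i : Fin m) × Fin (q i)) => X a k.1) d1 d2)).mulVec v = 0 := by
        rw [hv, dotProduct_zero]
      rw [quadid v] at h0
      set α : Fin m → ℝ := fun i => (∑ t, v ⟨i, t⟩) / (q i : ℝ) with hα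
      have t1 := hpsd.dotProduct_mulVec_nonneg α
      rw [hstar α] at t1
      have t2' : ∀ i ∈ Finset.univ, 0 ≤ (∑ j, (q j : ℝ) * hfun d1 d2 ((Xᵀ * X) i j)) *
          ((∑ t, v ⟨i, t⟩ * v ⟨i, t⟩) - (∑ t, v ⟨i, t⟩) * (∑ t, v ⟨i, t⟩) / (q i : ℝ)) :=
        fun i _ => mul_nonneg (le_of_lt (hc i)) (hD v i)
      have t2 := Finset.sum_nonneg t2'
      have hA0 : α ⬝ᵥ (lap (Mmat (Matrix.of fun i j => (q i : ℝ) * (q j : ℝ))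
          X d1 d2)).mulVec α = 0 := by linarith
      have hS0 : (∑ i, (∑ j, (q j : ℝ) * hfun d1 d2 ((Xᵀ * X) i j)) *
          ((∑ t, v ⟨i, t⟩ * v ⟨i, t⟩) - (∑ t, v ⟨i, t⟩) * (∑ t, v ⟨i, t⟩) / (q i : ℝ))) = 0 := by
        linarith
      have hDi : ∀ i, (∑ t, v ⟨i, t⟩ * v ⟨i, t⟩)
          - (∑ t, v ⟨i, t⟩) * (∑ t, v ⟨i, t⟩) / (q i : ℝ) = 0 := by
        intro i
        have hz := (Finset.sum_eq_zero_iff_of_nonneg t2').mp hS0 i (Finset.mem_univ i)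
        rcases mul_eq_zero.mp hz with h | h
        · exact absurd h (ne_of_gt (hc i))
        · exact h
      have hαker : (lap (Mmat (Matrix.of fun i j => (q i : ℝ) * (q j : ℝ))
          X d1 d2)).mulVec α = 0 := by
        refine (hpsd.dotProduct_mulVec_zero_iff α).mp ?_
        rw [hstar α]; exact hA0
      rcases (hker α).mp hαker with ⟨c, hcst⟩
      refine ⟨c, ?_⟩
      rintro ⟨i, t⟩
      have hs0 : ∑ u, (v ⟨i, u⟩ - (∑ u, v ⟨i, u⟩) / (q i : ℝ)) ^ 2 = 0 := by
        rw [var_id' (hq0 i)]; exact hDi i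
      have hzero := (Finset.sum_eq_zero_iff_of_nonneg
        (fun u _ => sq_nonneg _)).mp hs0 t (Finset.mem_univ t)
      have hvt : v ⟨i, t⟩ = (∑ u, v ⟨i, u⟩) / (q i : ℝ) :=
        sub_eq_zero.mp ((pow_eq_zero_iff (two_ne_zero)).mp hzero)
      rw [hvt]
      exact hcst i
    · rintro ⟨c, hcv⟩
      have hv : v = fun _ => c := funext hcv
      rw [hv]
      exact lap_const' _ c
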